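/- Let m ≥ 1, fix i ∈ {1,…,m}, let D_1,…,D_m be positive reals, let z and y_i be real numbers, and define π_sp(A) = t₂(A)·(A+D_i)²·A·exp(y_i²/(A+D_i)) for A > 0. Then π_sp is positive and differentiable on (0,∞), and for every A > 0, π_sp′(A)/π_sp(A) = l_i(A) − 2·t₃(A)/t₂(A) − D_i/(4A(A+D_i)) + 1/A − z²·D_i/(4A(A+D_i)) − y_i²/(A+D_i)². (This is the differential-equation verification in Proposition 2 of the paper: π_sp is the matching prior for the two-level model without covariates.) -/

import Mathlib

open Finset

/-- differential-equation verification in Proposition 2 of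
the paper. `pr_sp(A) = tr[V⁻²]·(A+Dᵢ)²·A·exp(yᵢ²/(A+Dᵢ))` is the matching
prior for the two-level model without covariates. -/
theorem matching_prior_no_covariates_solves_ode
    (m : ℕ) (hm : 1 ≤ m) (D : Fin m → ℝ) (hD : ∀ u, 0 < D u) (i : Fin m)
    (z yi : ℝ)
    (prsp : ℝ → ℝ)
    (hprsp : ∀ A : ℝ, prsp A =
      (∑ u : Fin m, ((A + D u) ^ 2)⁻¹) * (A + D i) ^ 2 * A
        * Real.exp (yi ^ 2 / (A + D i))) :
    ∀ A : ℝ, 0 < A →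
      0 < prsp A ∧ DifferentiableAt ℝ prsp A ∧
      deriv prsp A / prsp A =
        (2 / (A + D i) + (1 + z ^ 2) * D i / (4 * A * (A + D i)))
          - 2 * (∑ u : Fin m, ((A + D u) ^ 3)⁻¹)
              / (∑ u : Fin m, ((A + D u) ^ 2)⁻¹)
          - D i / (4 * A * (A + D i))
          + 1 / A
          - z ^ 2 * D i / (4 * A * (A + D i))
          - yi ^ 2 / (A + D i) ^ 2 := by
  have hfun : prsp = fun A =>
      (∑ u : Fin m, ((A + D u) ^ 2)⁻¹) * (A + D i) ^ 2 * A
        * Real.exp (yi ^ 2 / (A + D i)) := funext hprsp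
  intro A hA
  have hAD : ∀ u : Fin m, 0 < A + D u := fun u => add_pos hA (hD u)
  have hADi : 0 < A + D i := hAD i
  have hADine : A + D i ≠ 0 := ne_of_gt hADi
  -- positivity of the sum
  have ht2 : 0 < ∑ u : Fin m, ((A + D u) ^ 2)⁻¹ := by
    apply Finset.sum_pos
    · intro u _
      have := hAD u
      positivity
    · exact Finset.univ_nonempty_iff.mpr ⟨i⟩
  have hE : 0 < Real.exp (yi ^ 2 / (A + D i)) := Real.exp_pos _
  have hpos : 0 < prsp A := by
    rw [hprsp]
    positivity
  -- derivative of the sum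
  have hsum : HasDerivAt (fun A : ℝ => ∑ u : Fin m, ((A + D u) ^ 2)⁻¹)
      (-2 * ∑ u : Fin m, ((A + D u) ^ 3)⁻¹) A := by
    have : HasDerivAt (fun A : ℝ => ∑ u : Fin m, ((A + D u) ^ 2)⁻¹)
        (∑ u : Fin m, -(2 * (A + D u) ^ 1 * 1) / ((A + D u) ^ 2) ^ 2) A := by
      apply HasDerivAt.fun_sum
      intro u _
      exact (((hasDerivAt_id A).add_const (D u)).fun_pow 2).inv (by
        have := hAD u; positivity)
    convert this using 1
    rw [Finset.mul_sum]
    apply Finset.sum_congr rfl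
    intro u _
    have h := (hAD u).ne'
    field_simp
  -- derivative of the exponential factor
  have hIE : HasDerivAt (fun A : ℝ => Real.exp (yi ^ 2 / (A + D i)))
      (Real.exp (yi ^ 2 / (A + D i)) * (yi ^ 2 * (-1 / (A + D i) ^ 2))) A := by
    have h1 : HasDerivAt (fun A : ℝ => yi ^ 2 / (A + D i))
        (yi ^ 2 * (-1 / (A + D i) ^ 2)) A := by
      have := (((hasDerivAt_id A).add_const (D i)).inv hADine).const_mul (yi ^ 2)
      simpa [div_eq_mul_inv] using this
    exact h1.exp
  have hpow : HasDerivAt (fun A : ℝ => (A + D i) ^ 2) (2 * (A + D i)) A := by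
    have := ((hasDerivAt_id A).add_const (D i)).fun_pow 2
    simpa using this
  have hmain : HasDerivAt prsp
      (((-2 * ∑ u : Fin m, ((A + D u) ^ 3)⁻¹) * (A + D i) ^ 2
          + (∑ u : Fin m, ((A + D u) ^ 2)⁻¹) * (2 * (A + D i))) * A
          * Real.exp (yi ^ 2 / (A + D i))
        + ((∑ u : Fin m, ((A + D u) ^ 2)⁻¹) * (A + D i) ^ 2 * A)
          * (Real.exp (yi ^ 2 / (A + D i)) * (yi ^ 2 * (-1 / (A + D i) ^ 2)))
        + (∑ u : Fin m, ((A + D u) ^ 2)⁻¹) * (A + D i) ^ 2 * 1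
          * Real.exp (yi ^ 2 / (A + D i))) A := by
    rw [hfun]
    have := ((hsum.fun_mul hpow).fun_mul (hasDerivAt_id A)).fun_mul hIE
    exact this.congr_deriv (by simp only [id_eq]; ring)
  refine ⟨hpos, hmain.differentiableAt, ?_⟩
  rw [hmain.deriv, hprsp]
  have hAne : A ≠ 0 := ne_of_gt hA
  set T2 := ∑ u : Fin m, ((A + D u) ^ 2)⁻¹ with hT2
  set T3 := ∑ u : Fin m, ((A + D u) ^ 3)⁻¹ with hT3
  set E := Real.exp (yi ^ 2 / (A + D i)) with hEdef
  have ht2ne : T2 ≠ 0 := ne_of_gt ht2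
  have hEne : E ≠ 0 := ne_of_gt hE
  field_simp
  ring
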